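/- Consider the system x' = (H₂(ρ) x + y)/ρ, y' = x/ρ on ρ ∈ [ρ₁, ∞), with H₂ continuous and bounded. Any solution entering the open first quadrant satisfies x(ρ) → ∞ as ρ → ∞. Consequently, a solution that remains bounded for all ρ ≥ ρ₁ and that starts in the closed first quadrant must be identically zero. -/

import Mathlib

open Filter Set Real Topology


private lemma aux_mono {f f' : ℝ → ℝ} {s : Set ℝ} (hs : Convex ℝ s)
    (hf : ∀ z ∈ s, HasDerivAt f (f' z) z) (h0 : ∀ z ∈ s, 0 ≤ f' z) :
    MonotoneOn f s := by
  apply monotoneOn_of_deriv_nonneg hs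
  · exact fun z hz => (hf z hz).continuousAt.continuousWithinAt
  · exact fun z hz => (hf z (interior_subset hz)).differentiableAt.differentiableWithinAt
  · intro z hz
    rw [(hf z (interior_subset hz)).deriv]
    exact h0 z (interior_subset hz)

private lemma aux_anti {f f' : ℝ → ℝ} {s : Set ℝ} (hs : Convex ℝ s)
    (hf : ∀ z ∈ s, HasDerivAt f (f' z) z) (h0 : ∀ z ∈ s, f' z ≤ 0) :
    AntitoneOn f s := by
  apply antitoneOn_of_deriv_nonpos hs
  · exact fun z hz => (hf z hz).continuousAt.continuousWithinAt
  · exact fun z hz => (hf z (interior_subset hz)).differentiableAt.differentiableWithinAt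
  · intro z hz
    rw [(hf z (interior_subset hz)).deriv]
    exact h0 z (interior_subset hz)

private lemma aux_slope {f : ℝ → ℝ} {a d : ℝ} (hf : HasDerivAt f d a)
    (hd : 0 < d) (h0 : 0 ≤ f a) : ∀ᶠ z in 𝓝[>] a, 0 < f z := by
  have hs : Tendsto (slope f a) (𝓝[≠] a) (𝓝 d) := hasDerivAt_iff_tendsto_slope.1 hf
  have hev : ∀ᶠ z in 𝓝[≠] a, 0 < slope f a z := hs.eventually (eventually_gt_nhds hd)
  have hev' : ∀ᶠ z in 𝓝[>] a, 0 < slope f a z :=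
    hev.filter_mono (nhdsWithin_mono a fun z hz => Set.mem_compl_singleton_iff.2 (ne_of_gt hz))
  filter_upwards [hev', self_mem_nhdsWithin] with z hz hza
  have hza' : (0:ℝ) < z - a := sub_pos.2 hza
  have h2 := mul_pos hz hza'
  rw [slope_def_field, div_mul_cancel₀ _ (ne_of_gt hza')] at h2
  linarith

private lemma quad_pos (H₂ : ℝ → ℝ)
    (M : ℝ) (hM : ∀ ρ ∈ Set.Ioi (0 : ℝ), |H₂ ρ| ≤ M)
    (ρ₁ : ℝ) (hρ₁ : 0 < ρ₁) (x y : ℝ → ℝ)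
    (hx : ∀ ρ ∈ Set.Ici ρ₁, HasDerivAt x ((H₂ ρ * x ρ + y ρ) / ρ) ρ)
    (hy : ∀ ρ ∈ Set.Ici ρ₁, HasDerivAt y (x ρ / ρ) ρ)
    (ρ₂ : ℝ) (hρ₂ : ρ₂ ∈ Set.Ici ρ₁) (hx2 : 0 < x ρ₂) (hy2 : 0 < y ρ₂) :
    ∀ ρ ∈ Set.Ici ρ₂, 0 < x ρ ∧ 0 < y ρ := by
  have hM0 : 0 ≤ M := le_trans (abs_nonneg _) (hM ρ₁ hρ₁)
  have hρ₂0 : 0 < ρ₂ := lt_of_lt_of_le hρ₁ hρ₂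
  by_contra hcon
  push_neg at hcon
  set S : Set ℝ := {ρ | ρ₂ ≤ ρ ∧ (x ρ ≤ 0 ∨ y ρ ≤ 0)} with hSdef
  have hne : S.Nonempty := by
    obtain ⟨ρ₀, hρ₀, hbad⟩ := hcon
    refine ⟨ρ₀, hρ₀, ?_⟩
    rcases le_or_gt (x ρ₀) 0 with h | h
    · exact Or.inl h
    · exact Or.inr (hbad h)
  have hbdd : BddBelow S := ⟨ρ₂, fun ρ hρ => hρ.1⟩
  have hcxS : ContinuousOn x (Set.Ici ρ₂) := fun ρ hρ =>
    (hx ρ (Set.mem_Ici.2 (le_trans (Set.mem_Ici.1 hρ₂) (Set.mem_Ici.1 hρ)))).continuousAt.continuousWithinAt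
  have hcyS : ContinuousOn y (Set.Ici ρ₂) := fun ρ hρ =>
    (hy ρ (Set.mem_Ici.2 (le_trans (Set.mem_Ici.1 hρ₂) (Set.mem_Ici.1 hρ)))).continuousAt.continuousWithinAt
  have hSclosed : IsClosed S := by
    have h1 : IsClosed (Set.Ici ρ₂ ∩ x ⁻¹' Set.Iic 0) :=
      hcxS.preimage_isClosed_of_isClosed isClosed_Ici isClosed_Iic
    have h2 : IsClosed (Set.Ici ρ₂ ∩ y ⁻¹' Set.Iic 0) :=
      hcyS.preimage_isClosed_of_isClosed isClosed_Ici isClosed_Iic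
    have : S = (Set.Ici ρ₂ ∩ x ⁻¹' Set.Iic 0) ∪ (Set.Ici ρ₂ ∩ y ⁻¹' Set.Iic 0) := by
      ext ρ; simp [hSdef, Set.mem_Ici, Set.mem_Iic]; tauto
    rw [this]; exact h1.union h2
  set τ := sInf S with hτdef
  have hτS : τ ∈ S := hSclosed.csInf_mem hne hbdd
  have hτ₂ : ρ₂ ≤ τ := le_csInf hne fun ρ hρ => hρ.1
  have hρ₂notS : ρ₂ ∉ S := by
    intro h
    rcases h.2 with h' | h' <;> linarith
  have hτgt : ρ₂ < τ := lt_of_le_of_ne hτ₂ (by intro h; exact hρ₂notS (h ▸ hτS))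
  have hbefore : ∀ ρ, ρ₂ ≤ ρ → ρ < τ → 0 < x ρ ∧ 0 < y ρ := by
    intro ρ h1 h2
    by_contra hc
    have hmem : ρ ∈ S := by
      refine ⟨h1, ?_⟩
      rcases le_or_gt (x ρ) 0 with h | h
      · exact Or.inl h
      rcases le_or_gt (y ρ) 0 with h' | h'
      · exact Or.inr h'
      exact absurd ⟨h, h'⟩ hc
    exact absurd (csInf_le hbdd hmem) (not_le.2 h2)
  have hIoo : Set.Ioo ρ₂ τ ∈ 𝓝[<] τ := Ioo_mem_nhdsLT_of_mem ⟨hτgt, le_refl τ⟩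
  have hxτ : 0 ≤ x τ := by
    have ht : Tendsto x (𝓝[<] τ) (𝓝 (x τ)) :=
      ((hx τ (le_trans hρ₂ hτ₂)).continuousAt.tendsto).mono_left nhdsWithin_le_nhds
    refine ge_of_tendsto ht ?_
    filter_upwards [hIoo] with ρ hρ
    exact (hbefore ρ hρ.1.le hρ.2).1.le
  have hyτ : 0 ≤ y τ := by
    have ht : Tendsto y (𝓝[<] τ) (𝓝 (y τ)) :=
      ((hy τ (le_trans hρ₂ hτ₂)).continuousAt.tendsto).mono_left nhdsWithin_le_nhds
    refine ge_of_tendsto ht ?_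
    filter_upwards [hIoo] with ρ hρ
    exact (hbefore ρ hρ.1.le hρ.2).2.le
  have hxnn : ∀ ρ ∈ Set.Icc ρ₂ τ, 0 ≤ x ρ := by
    intro ρ hρ
    rcases lt_or_eq_of_le hρ.2 with h | h
    · exact (hbefore ρ hρ.1 h).1.le
    · exact h ▸ hxτ
  have hynn : ∀ ρ ∈ Set.Icc ρ₂ τ, 0 ≤ y ρ := by
    intro ρ hρ
    rcases lt_or_eq_of_le hρ.2 with h | h
    · exact (hbefore ρ hρ.1 h).2.le
    · exact h ▸ hyτ
  have hmemIci : ∀ ρ ∈ Set.Icc ρ₂ τ, ρ ∈ Set.Ici ρ₁ := fun ρ hρ => Set.mem_Ici.2 (le_trans (Set.mem_Ici.1 hρ₂) hρ.1)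
  have hpos : ∀ ρ ∈ Set.Icc ρ₂ τ, 0 < ρ := fun ρ hρ => lt_of_lt_of_le hρ₂0 hρ.1
  rcases hτS.2 with hxτ0 | hyτ0
  · -- x τ ≤ 0, so x τ = 0; use F = ρ^M * x ρ
    have hxτ0' : x τ = 0 := le_antisymm hxτ0 hxτ
    have hF : MonotoneOn (fun ρ => ρ ^ M * x ρ)
        (Set.Icc ρ₂ τ) := by
      apply aux_mono (convex_Icc ρ₂ τ)
        (f' := fun ρ => M * ρ ^ (M - 1) * x ρ + ρ ^ M * ((H₂ ρ * x ρ + y ρ) / ρ))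
      · intro ρ hρ
        exact (Real.hasDerivAt_rpow_const (Or.inl (hpos ρ hρ).ne')).mul (hx ρ (hmemIci ρ hρ))
      · intro ρ hρ
        have hρ0 : 0 < ρ := hpos ρ hρ
        have hkey : M * ρ ^ (M - 1) * x ρ + ρ ^ M * ((H₂ ρ * x ρ + y ρ) / ρ)
            = ρ ^ (M - 1) * ((M + H₂ ρ) * x ρ + y ρ) := by
          have h1 : ρ ^ M = ρ ^ (M - 1) * ρ := by
            rw [← Real.rpow_add_one hρ0.ne' (M - 1)]; ring_nf
          rw [h1]
          field_simp
          ring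
        rw [hkey]
        have hH : -M ≤ H₂ ρ := neg_le_of_abs_le (hM ρ (lt_of_lt_of_le hρ₁ (hmemIci ρ hρ)))
        have h2 : 0 ≤ (M + H₂ ρ) * x ρ := mul_nonneg (by linarith) (hxnn ρ hρ)
        have h3 := hynn ρ hρ
        positivity
    have hmono := hF (Set.left_mem_Icc.2 hτ₂) (Set.right_mem_Icc.2 hτ₂) hτ₂
    simp only [hxτ0', mul_zero] at hmono
    have : 0 < ρ₂ ^ M * x ρ₂ := mul_pos (Real.rpow_pos_of_pos hρ₂0 M) hx2
    linarith
  · -- y τ ≤ 0; but y is monotone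
    have hYmono : MonotoneOn y (Set.Icc ρ₂ τ) := by
      apply aux_mono (convex_Icc ρ₂ τ) (f' := fun ρ => x ρ / ρ)
      · exact fun ρ hρ => hy ρ (hmemIci ρ hρ)
      · exact fun ρ hρ => div_nonneg (hxnn ρ hρ) (hpos ρ hρ).le
    have := hYmono (Set.left_mem_Icc.2 hτ₂) (Set.right_mem_Icc.2 hτ₂) hτ₂
    linarith

private lemma grow (H₂ : ℝ → ℝ)
    (M : ℝ) (hM : ∀ ρ ∈ Set.Ioi (0 : ℝ), |H₂ ρ| ≤ M)
    (ρ₁ : ℝ) (hρ₁ : 0 < ρ₁) (x y : ℝ → ℝ)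
    (hx : ∀ ρ ∈ Set.Ici ρ₁, HasDerivAt x ((H₂ ρ * x ρ + y ρ) / ρ) ρ)
    (hy : ∀ ρ ∈ Set.Ici ρ₁, HasDerivAt y (x ρ / ρ) ρ)
    (ρ₂ : ℝ) (hρ₂ : ρ₂ ∈ Set.Ici ρ₁)
    (hpos : ∀ ρ ∈ Set.Ici ρ₂, 0 < x ρ ∧ 0 < y ρ) :
    Tendsto x atTop atTop := by
  have hM0 : 0 ≤ M := le_trans (abs_nonneg _) (hM ρ₁ hρ₁)
  have hρ₂0 : 0 < ρ₂ := lt_of_lt_of_le hρ₁ hρ₂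
  have hmemIci : ∀ ρ ∈ Set.Ici ρ₂, ρ ∈ Set.Ici ρ₁ := fun ρ hρ => Set.mem_Ici.2 (le_trans (Set.mem_Ici.1 hρ₂) (Set.mem_Ici.1 hρ))
  have hrpos : ∀ ρ ∈ Set.Ici ρ₂, (0:ℝ) < ρ := fun ρ hρ => lt_of_lt_of_le hρ₂0 hρ
  set α : ℝ := (M + 1)⁻¹ with hαdef
  have hα : 0 < α := inv_pos.2 (by linarith)
  have hα1 : α * (M + 1) = 1 := inv_mul_cancel₀ (by linarith)
  have hαle : α ≤ 1 := by nlinarith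
  -- Step 1: z ρ := α x + y satisfies z ρ ≥ B₀ ρ^α
  set B₀ : ℝ := ρ₂ ^ (-α) * (α * x ρ₂ + y ρ₂) with hB₀def
  have hz₂ : 0 < α * x ρ₂ + y ρ₂ := by
    have h := hpos ρ₂ (le_refl ρ₂)
    nlinarith [h.1, h.2]
  have hB₀ : 0 < B₀ := mul_pos (Real.rpow_pos_of_pos hρ₂0 _) hz₂
  have hG : MonotoneOn (fun ρ => ρ ^ (-α) * (α * x ρ + y ρ)) (Set.Ici ρ₂) := by
    apply aux_mono (convex_Ici ρ₂)
      (f' := fun ρ => (-α) * ρ ^ (-α - 1) * (α * x ρ + y ρ)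
        + ρ ^ (-α) * (α * ((H₂ ρ * x ρ + y ρ) / ρ) + x ρ / ρ))
    · intro ρ hρ
      exact (Real.hasDerivAt_rpow_const (Or.inl (hrpos ρ hρ).ne')).mul
        (((hx ρ (hmemIci ρ hρ)).const_mul α).add (hy ρ (hmemIci ρ hρ)))
    · intro ρ hρ
      have hρ0 : 0 < ρ := hrpos ρ hρ
      have hkey : (-α) * ρ ^ (-α - 1) * (α * x ρ + y ρ)
          + ρ ^ (-α) * (α * ((H₂ ρ * x ρ + y ρ) / ρ) + x ρ / ρ)
          = ρ ^ (-α - 1) * ((1 - α ^ 2 + α * H₂ ρ) * x ρ) := by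
        have h1 : ρ ^ (-α) = ρ ^ (-α - 1) * ρ := by
          rw [← Real.rpow_add_one hρ0.ne' (-α - 1)]; ring_nf
        rw [h1]; field_simp; ring
      rw [hkey]
      have hH : -M ≤ H₂ ρ := neg_le_of_abs_le (hM ρ (lt_of_lt_of_le hρ₁ (hmemIci ρ hρ)))
      have hxp := (hpos ρ hρ).1
      have hc : 0 ≤ 1 - α ^ 2 + α * H₂ ρ := by nlinarith
      positivity
  have hzlb : ∀ ρ ∈ Set.Ici ρ₂, B₀ * ρ ^ α ≤ α * x ρ + y ρ := by
    intro ρ hρ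
    have h := hG (Set.self_mem_Ici) hρ hρ
    -- h : ρ₂^(-α) * (α x ρ₂ + y ρ₂) ≤ ρ^(-α) * (α x ρ + y ρ)
    have hρ0 : 0 < ρ := hrpos ρ hρ
    have hra : (0:ℝ) < ρ ^ α := Real.rpow_pos_of_pos hρ0 α
    have hcancel : ρ ^ α * ρ ^ (-α) = 1 := by
      rw [← Real.rpow_add hρ0]; simp
    calc B₀ * ρ ^ α ≤ (ρ ^ (-α) * (α * x ρ + y ρ)) * ρ ^ α := by
          rw [hB₀def]; exact mul_le_mul_of_nonneg_right h hra.le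
      _ = (ρ ^ α * ρ ^ (-α)) * (α * x ρ + y ρ) := by ring
      _ = α * x ρ + y ρ := by rw [hcancel, one_mul]
  -- Step 2: Φ = ρ^K x - B₁ ρ^(K+α) monotone
  set K : ℝ := M + α with hKdef
  have hK : 0 < K := by positivity
  set B₁ : ℝ := B₀ / (K + α) with hB₁def
  have hB₁ : 0 < B₁ := div_pos hB₀ (by positivity)
  have hΦ : MonotoneOn (fun ρ => ρ ^ K * x ρ - B₁ * ρ ^ (K + α)) (Set.Ici ρ₂) := by
    apply aux_mono (convex_Ici ρ₂)
      (f' := fun ρ => (K * ρ ^ (K - 1) * x ρ + ρ ^ K * ((H₂ ρ * x ρ + y ρ) / ρ))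
        - B₁ * ((K + α) * ρ ^ (K + α - 1)))
    · intro ρ hρ
      exact ((Real.hasDerivAt_rpow_const (Or.inl (hrpos ρ hρ).ne')).mul
        (hx ρ (hmemIci ρ hρ))).sub
        ((Real.hasDerivAt_rpow_const (Or.inl (hrpos ρ hρ).ne')).const_mul B₁)
    · intro ρ hρ
      have hρ0 : 0 < ρ := hrpos ρ hρ
      have hB01 : B₁ * (K + α) = B₀ := by
        rw [hB₁def]; field_simp
      have hkey : (K * ρ ^ (K - 1) * x ρ + ρ ^ K * ((H₂ ρ * x ρ + y ρ) / ρ))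
          - B₁ * ((K + α) * ρ ^ (K + α - 1))
          = ρ ^ (K - 1) * ((K + H₂ ρ) * x ρ + y ρ - B₀ * ρ ^ α) := by
        have h1 : ρ ^ K = ρ ^ (K - 1) * ρ := by
          rw [← Real.rpow_add_one hρ0.ne' (K - 1)]; ring_nf
        have h2 : ρ ^ (K + α - 1) = ρ ^ (K - 1) * ρ ^ α := by
          rw [← Real.rpow_add hρ0]; ring_nf
        rw [h1, h2, ← hB01]; field_simp; ring
      rw [hkey]
      have hH : -M ≤ H₂ ρ := neg_le_of_abs_le (hM ρ (lt_of_lt_of_le hρ₁ (hmemIci ρ hρ)))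
      have hxp := (hpos ρ hρ).1
      have hzl := hzlb ρ hρ
      have hMH : 0 ≤ (M + H₂ ρ) * x ρ := mul_nonneg (by linarith) hxp.le
      have hin : 0 ≤ (K + H₂ ρ) * x ρ + y ρ - B₀ * ρ ^ α := by
        have : (K + H₂ ρ) * x ρ + y ρ = (M + H₂ ρ) * x ρ + (α * x ρ + y ρ) := by
          rw [hKdef]; ring
        linarith [this ▸ le_refl ((K + H₂ ρ) * x ρ + y ρ)]
      exact mul_nonneg (Real.rpow_pos_of_pos hρ0 _).le hin
  -- Step 3: extract lower bound and conclude
  set D : ℝ := ρ₂ ^ K * x ρ₂ - B₁ * ρ₂ ^ (K + α) with hDdef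
  have hlb : ∀ ρ ∈ Set.Ici ρ₂, B₁ * ρ ^ α + D * ρ ^ (-K) ≤ x ρ := by
    intro ρ hρ
    have h := hΦ Set.self_mem_Ici hρ hρ
    have hρ0 : 0 < ρ := hrpos ρ hρ
    have hrK : (0:ℝ) < ρ ^ (-K) := Real.rpow_pos_of_pos hρ0 _
    have hcancel : ρ ^ (-K) * ρ ^ K = 1 := by rw [← Real.rpow_add hρ0]; simp
    have hcancel2 : ρ ^ (-K) * ρ ^ (K + α) = ρ ^ α := by
      rw [← Real.rpow_add hρ0]; ring_nf
    have h' : ρ₂ ^ K * x ρ₂ - B₁ * ρ₂ ^ (K + α) ≤ ρ ^ K * x ρ - B₁ * ρ ^ (K + α) := h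
    have h3 : D + B₁ * ρ ^ (K + α) ≤ ρ ^ K * x ρ := by rw [hDdef]; linarith
    calc B₁ * ρ ^ α + D * ρ ^ (-K)
        = ρ ^ (-K) * (D + B₁ * ρ ^ (K + α)) := by linear_combination (-B₁) * hcancel2
      _ ≤ ρ ^ (-K) * (ρ ^ K * x ρ) := mul_le_mul_of_nonneg_left h3 hrK.le
      _ = x ρ := by rw [← mul_assoc, hcancel, one_mul]
  have h1 : Tendsto (fun ρ : ℝ => B₁ * ρ ^ α) atTop atTop :=
    (tendsto_rpow_atTop hα).const_mul_atTop hB₁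
  have h2 : Tendsto (fun ρ : ℝ => D * ρ ^ (-K)) atTop (𝓝 0) := by
    have := (tendsto_rpow_neg_atTop hK).const_mul D
    simpa using this
  have h3 : Tendsto (fun ρ : ℝ => B₁ * ρ ^ α + D * ρ ^ (-K)) atTop atTop :=
    h1.atTop_add h2
  apply tendsto_atTop_mono' atTop _ h3
  filter_upwards [eventually_ge_atTop ρ₂] with ρ hρ
  exact hlb ρ hρ


/-- For the system `x' = (H₂(ρ)x + y)/ρ`, `y' = x/ρ` with `H₂` continuous and
bounded: any solution entering the open first quadrant has `x(ρ) → ∞` as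
`ρ → ∞`; consequently a bounded solution starting in the closed first
quadrant is identically zero. -/
theorem stmt_4 (H₂ : ℝ → ℝ) (hH₂ : ContinuousOn H₂ (Set.Ioi 0))
    (M : ℝ) (hM : ∀ ρ ∈ Set.Ioi (0 : ℝ), |H₂ ρ| ≤ M)
    (ρ₁ : ℝ) (hρ₁ : 0 < ρ₁) (x y : ℝ → ℝ)
    (hx : ∀ ρ ∈ Set.Ici ρ₁, HasDerivAt x ((H₂ ρ * x ρ + y ρ) / ρ) ρ)
    (hy : ∀ ρ ∈ Set.Ici ρ₁, HasDerivAt y (x ρ / ρ) ρ) :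
    ((∃ ρ₂ ∈ Set.Ici ρ₁, 0 < x ρ₂ ∧ 0 < y ρ₂) → Tendsto x atTop atTop) ∧
    ((∃ C : ℝ, ∀ ρ ∈ Set.Ici ρ₁, |x ρ| ≤ C ∧ |y ρ| ≤ C) →
      0 ≤ x ρ₁ → 0 ≤ y ρ₁ → ∀ ρ ∈ Set.Ici ρ₁, x ρ = 0 ∧ y ρ = 0) := by
  have hM0 : 0 ≤ M := le_trans (abs_nonneg _) (hM ρ₁ hρ₁)
  have part1 : (∃ ρ₂ ∈ Set.Ici ρ₁, 0 < x ρ₂ ∧ 0 < y ρ₂) → Tendsto x atTop atTop := by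
    rintro ⟨ρ₂, hρ₂, hx2, hy2⟩
    exact grow H₂ M hM ρ₁ hρ₁ x y hx hy ρ₂ hρ₂
      (quad_pos H₂ M hM ρ₁ hρ₁ x y hx hy ρ₂ hρ₂ hx2 hy2)
  refine ⟨part1, ?_⟩
  rintro ⟨C, hC⟩ hx0 hy0
  -- no point in the open first quadrant
  have noEnter : ¬ ∃ ρ₂ ∈ Set.Ici ρ₁, 0 < x ρ₂ ∧ 0 < y ρ₂ := by
    intro h
    obtain ⟨z, hz1, hz2⟩ :=
      (((part1 h).eventually_ge_atTop (C + 1)).and (eventually_ge_atTop ρ₁)).exists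
    have h1 := (hC z hz2).1
    have := le_abs_self (x z)
    linarith
  -- deduce x ρ₁ = 0 and y ρ₁ = 0
  have hEnter : ∀ z ∈ Set.Ioi ρ₁, 0 < x z → 0 < y z → False := fun z hz hxz hyz =>
    noEnter ⟨z, Set.mem_Ici.2 (le_of_lt (Set.mem_Ioi.1 hz)), hxz, hyz⟩
  have hx1 : x ρ₁ = 0 := by
    by_contra h
    have hxp : 0 < x ρ₁ := lt_of_le_of_ne hx0 (Ne.symm h)
    rcases lt_or_eq_of_le hy0 with hyp | hyp
    · exact noEnter ⟨ρ₁, le_refl ρ₁, hxp, hyp⟩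
    · -- y ρ₁ = 0, but y' ρ₁ > 0
      have hd : 0 < x ρ₁ / ρ₁ := div_pos hxp hρ₁
      have hys := aux_slope (hy ρ₁ (le_refl ρ₁)) hd (le_of_eq hyp)
      have hxs : ∀ᶠ z in 𝓝[>] ρ₁, 0 < x z :=
        ((hx ρ₁ (le_refl ρ₁)).continuousAt.eventually
          (eventually_gt_nhds hxp)).filter_mono nhdsWithin_le_nhds
      obtain ⟨z, hz⟩ := (hys.and (hxs.and eventually_mem_nhdsWithin)).exists
      exact hEnter z hz.2.2 hz.2.1 hz.1
  have hy1 : y ρ₁ = 0 := by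
    by_contra h
    have hyp : 0 < y ρ₁ := lt_of_le_of_ne hy0 (Ne.symm h)
    have hd : 0 < (H₂ ρ₁ * x ρ₁ + y ρ₁) / ρ₁ := by
      rw [hx1]; simpa using div_pos hyp hρ₁
    have hxs := aux_slope (hx ρ₁ (le_refl ρ₁)) hd hx0
    have hys : ∀ᶠ z in 𝓝[>] ρ₁, 0 < y z :=
      ((hy ρ₁ (le_refl ρ₁)).continuousAt.eventually
        (eventually_gt_nhds hyp)).filter_mono nhdsWithin_le_nhds
    obtain ⟨z, hz⟩ := (hxs.and (hys.and eventually_mem_nhdsWithin)).exists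
    exact hEnter z hz.2.2 hz.1 hz.2.1
  -- Gronwall: u = x² + y² is identically zero
  set C₀ : ℝ := (2 * M + 2) / ρ₁ with hC₀def
  have hV : AntitoneOn (fun ρ => (x ρ * x ρ + y ρ * y ρ) * Real.exp (-C₀ * ρ))
      (Set.Ici ρ₁) := by
    apply aux_anti (convex_Ici ρ₁)
      (f' := fun ρ => (((H₂ ρ * x ρ + y ρ) / ρ) * x ρ + x ρ * ((H₂ ρ * x ρ + y ρ) / ρ)
          + ((x ρ / ρ) * y ρ + y ρ * (x ρ / ρ))) * Real.exp (-C₀ * ρ)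
        + (x ρ * x ρ + y ρ * y ρ) * (Real.exp (-C₀ * ρ) * (-C₀)))
    · intro ρ hρ
      have hd := (((hx ρ hρ).mul (hx ρ hρ)).add ((hy ρ hρ).mul (hy ρ hρ))).mul
        (((hasDerivAt_id ρ).const_mul (-C₀)).exp)
      simp only [id_eq, mul_one] at hd
      exact hd
    · intro ρ hρ
      have hρ0 : 0 < ρ := lt_of_lt_of_le hρ₁ hρ
      have hHle : H₂ ρ ≤ M := le_of_abs_le (hM ρ hρ0)
      have hexp : 0 < Real.exp (-C₀ * ρ) := Real.exp_pos _
      have hstep : ((H₂ ρ * x ρ + y ρ) / ρ) * x ρ + x ρ * ((H₂ ρ * x ρ + y ρ) / ρ)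
          + ((x ρ / ρ) * y ρ + y ρ * (x ρ / ρ)) ≤ C₀ * (x ρ * x ρ + y ρ * y ρ) := by
        have heq : ((H₂ ρ * x ρ + y ρ) / ρ) * x ρ + x ρ * ((H₂ ρ * x ρ + y ρ) / ρ)
            + ((x ρ / ρ) * y ρ + y ρ * (x ρ / ρ))
            = (2 * H₂ ρ * (x ρ * x ρ) + 4 * (x ρ * y ρ)) / ρ := by
          field_simp; ring
        rw [heq]
        have hnum : 2 * H₂ ρ * (x ρ * x ρ) + 4 * (x ρ * y ρ)
            ≤ (2 * M + 2) * (x ρ * x ρ + y ρ * y ρ) := by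
          nlinarith [sq_nonneg (x ρ - y ρ), sq_nonneg (x ρ + y ρ), mul_self_nonneg (x ρ),
            mul_self_nonneg (y ρ), mul_le_mul_of_nonneg_right hHle (mul_self_nonneg (x ρ))]
        have hA : 0 ≤ (2 * M + 2) * (x ρ * x ρ + y ρ * y ρ) :=
          mul_nonneg (by linarith) (by nlinarith [mul_self_nonneg (x ρ), mul_self_nonneg (y ρ)])
        calc (2 * H₂ ρ * (x ρ * x ρ) + 4 * (x ρ * y ρ)) / ρ
            ≤ ((2 * M + 2) * (x ρ * x ρ + y ρ * y ρ)) / ρ₁ := div_le_div₀ hA hnum hρ₁ hρ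
          _ = C₀ * (x ρ * x ρ + y ρ * y ρ) := by rw [hC₀def]; ring
      nlinarith [mul_le_mul_of_nonneg_right hstep hexp.le]
  intro ρ hρ
  have h1 := hV Set.self_mem_Ici hρ hρ
  simp only [hx1, hy1] at h1
  have hexp : 0 < Real.exp (-C₀ * ρ) := Real.exp_pos _
  have h2 : (0:ℝ) ≤ (x ρ * x ρ + y ρ * y ρ) * Real.exp (-C₀ * ρ) :=
    mul_nonneg (by nlinarith [mul_self_nonneg (x ρ), mul_self_nonneg (y ρ)]) hexp.le
  have hu : x ρ * x ρ + y ρ * y ρ = 0 := by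
    have h3 : (x ρ * x ρ + y ρ * y ρ) * Real.exp (-C₀ * ρ) = 0 := le_antisymm (by linarith) h2
    rcases mul_eq_zero.1 h3 with h | h
    · exact h
    · exact absurd h hexp.ne'
  constructor
  · have : x ρ * x ρ = 0 := by nlinarith [mul_self_nonneg (x ρ), mul_self_nonneg (y ρ)]
    exact mul_self_eq_zero.1 this
  · have : y ρ * y ρ = 0 := by nlinarith [mul_self_nonneg (x ρ), mul_self_nonneg (y ρ)]
    exact mul_self_eq_zero.1 this
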